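/- Let e : [0,∞) → (0,1] satisfy e(r) + a₀ r^{1/5} e(r)^{3/5} = 1 for r > 0, with e differentiable on (0,∞). Then the derivative of η(r) = r e(r) satisfies η'(r) = e(r) · (e(r) + (2/5)(1−e(r))) / (e(r) + (3/5)(1−e(r))) for all r > 0; in particular η'(r) ≥ (2/5) e(r). -/

import Mathlib

open Real

/-- Explicit formula and lower bound for `η'(r)` where `η(r) = r e(r)` and `e`
is the viscoelastic restitution coefficient. -/
theorem viscoelastic_eta_deriv (a₀ : ℝ) (ha : 0 < a₀) (e e' : ℝ → ℝ)
    (hrange : ∀ r ≥ (0 : ℝ), 0 < e r ∧ e r ≤ 1)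
    (himp : ∀ r > (0 : ℝ), e r + a₀ * r ^ ((1 : ℝ) / 5) * (e r) ^ ((3 : ℝ) / 5) = 1)
    (hderiv : ∀ r > (0 : ℝ), HasDerivAt e (e' r) r) :
    ∀ r > (0 : ℝ),
      HasDerivAt (fun s => s * e s)
        (e r * (e r + 2 / 5 * (1 - e r)) / (e r + 3 / 5 * (1 - e r))) r
      ∧ 2 / 5 * e r ≤ e r * (e r + 2 / 5 * (1 - e r)) / (e r + 3 / 5 * (1 - e r)) := by
  intro r hr
  obtain ⟨hE0, hE1⟩ := hrange r hr.le
  have hD := hderiv r hr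
  have hpow1 : HasDerivAt (fun s : ℝ => s ^ ((1:ℝ)/5)) (((1:ℝ)/5) * r ^ ((1:ℝ)/5 - 1)) r :=
    Real.hasDerivAt_rpow_const (Or.inl hr.ne')
  have hpow2 : HasDerivAt (fun s => e s ^ ((3:ℝ)/5)) (e' r * ((3:ℝ)/5) * e r ^ ((3:ℝ)/5 - 1)) r :=
    hD.rpow_const (Or.inl hE0.ne')
  have hg := hD.add ((hpow1.const_mul a₀).mul hpow2)
  have hzero : HasDerivAt (fun s => e s + a₀ * s ^ ((1:ℝ)/5) * e s ^ ((3:ℝ)/5)) 0 r := by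
    have h1 : (fun s => e s + a₀ * s ^ ((1:ℝ)/5) * e s ^ ((3:ℝ)/5)) =ᶠ[nhds r] fun _ => 1 := by
      filter_upwards [Ioi_mem_nhds hr] with s hs
      exact himp s hs
    exact (hasDerivAt_const r 1).congr_of_eventuallyEq h1
  have heq := hg.unique hzero
  have hr1 : r ^ ((1:ℝ)/5 - 1) = r ^ ((1:ℝ)/5) / r := by
    rw [Real.rpow_sub hr, Real.rpow_one]
  have hE2 : e r ^ ((3:ℝ)/5 - 1) = e r ^ ((3:ℝ)/5) / e r := by
    rw [Real.rpow_sub hE0, Real.rpow_one]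
  rw [hr1, hE2] at heq
  have hA : a₀ * r ^ ((1:ℝ)/5) * e r ^ ((3:ℝ)/5) = 1 - e r := by
    have := himp r hr; linarith
  have hden : (0:ℝ) < e r + 3/5*(1 - e r) := by nlinarith
  -- solve for r * e' r
  have key : e' r * (5 * e r * r + 3 * (1 - e r) * r) = -((1 - e r) * e r) := by
    have h5 : (0:ℝ) < r ^ ((1:ℝ)/5) := Real.rpow_pos_of_pos hr _
    have h6 : (0:ℝ) < e r ^ ((3:ℝ)/5) := Real.rpow_pos_of_pos hE0 _
    field_simp at heq
    linear_combination heq - (e r + 3 * e' r * r) * hA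
  have hval : 1 * e r + r * e' r = e r * (e r + 2/5*(1 - e r)) / (e r + 3/5*(1 - e r)) := by
    rw [eq_div_iff hden.ne']
    nlinarith [key, hr]
  constructor
  · have hmain : HasDerivAt (fun s => s * e s) (1 * e r + r * e' r) r := by
      exact (hasDerivAt_id' r).mul hD
    exact hval ▸ hmain
  · rw [le_div_iff₀ hden]
    nlinarith [hE0, hE1]
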